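/- Let $n$ be a positive integer, $d$ a nontrivial proper divisor of $n$, and $p$ a prime. Define $I_{n,d} = \frac{n!}{(d!)^{n/d}(n/d)!}$. Then $p$ divides $I_{n,d}$ if and only if (i) at least one carry occurs when adding $n/d$ copies of $d$ in base $p$, and (ii) $d$ is not a power of $p$. -/

import Mathlib

namespace Stmt6Aux

/-- `i`-th base-`p` digit of `x`. -/
def g (p x i : ℕ) : ℕ := x / p ^ i % p

/-- sum of base-`p` digits of `x`. -/
def s (p x : ℕ) : ℕ := (Nat.digits p x).sum

variable {p : ℕ}

lemma g_zero (x : ℕ) : g p x 0 = x % p := by simp [g]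

lemma g_succ (x i : ℕ) : g p x (i + 1) = g p (x / p) i := by
  unfold g
  rw [Nat.div_div_eq_div_mul, ← pow_succ']

lemma g_zero_left (i : ℕ) : g p 0 i = 0 := by simp [g]

lemma s_eq (hp : 1 < p) (x : ℕ) : s p x = x % p + s p (x / p) := by
  rcases Nat.eq_zero_or_pos x with rfl | hx
  · simp [s]
  · rw [s, Nat.digits_def' hp hx]
    simp [s]

lemma getD_eq (hp : 1 < p) (x i : ℕ) : (Nat.digits p x).getD i 0 = g p x i := by
  induction i generalizing x with
  | zero =>
    rcases Nat.eq_zero_or_pos x with rfl | hx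
    · simp [g]
    · rw [Nat.digits_def' hp hx]
      simp [g]
  | succ i ih =>
    rcases Nat.eq_zero_or_pos x with rfl | hx
    · simp [g]
    · rw [Nat.digits_def' hp hx]
      simpa [g_succ] using ih (x / p)

lemma s_le (x : ℕ) : s p x ≤ x := Nat.digit_sum_le p x

lemma s_self (hp : 1 < p) {x : ℕ} (hx : x < p) : s p x = x := by
  rw [s_eq hp, Nat.mod_eq_of_lt hx, Nat.div_eq_of_lt hx]
  simp [s]

lemma s_p_mul (hp : 1 < p) (x : ℕ) : s p (p * x) = s p x := by
  have hp0 : 0 < p := by omega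
  rw [s_eq hp, Nat.mul_mod_right, Nat.mul_div_cancel_left _ hp0, zero_add]

lemma s_pow (hp : 1 < p) (c : ℕ) : s p (p ^ c) = 1 := by
  induction c with
  | zero => simpa using s_self hp hp
  | succ c ih => rw [pow_succ, mul_comm, s_p_mul hp, ih]

lemma s_mul_pow (hp : 1 < p) (x c : ℕ) : s p (x * p ^ c) = s p x := by
  induction c with
  | zero => simp
  | succ c ih =>
    have : x * p ^ (c + 1) = p * (x * p ^ c) := by ring
    rw [this, s_p_mul hp, ih]

lemma s_eq_zero (hp : 1 < p) : ∀ x, s p x = 0 → x = 0 := by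
  intro x
  induction x using Nat.strong_induction_on with
  | _ x ih =>
    intro h
    rcases Nat.eq_zero_or_pos x with rfl | hx
    · rfl
    rw [s_eq hp] at h
    have h2 := ih (x / p) (Nat.div_lt_self hx hp) (by omega)
    have h3 := Nat.div_add_mod x p
    rw [h2, Nat.mul_zero] at h3
    omega

lemma s_eq_one (hp : 1 < p) : ∀ x, s p x = 1 → ∃ c, x = p ^ c := by
  intro x
  induction x using Nat.strong_induction_on with
  | _ x ih =>
    intro h
    rcases Nat.eq_zero_or_pos x with rfl | hx
    · simp [s] at h
    rw [s_eq hp] at h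
    have hdm := Nat.div_add_mod x p
    rcases Nat.eq_zero_or_pos (x % p) with h0 | h0
    · have h1 : s p (x / p) = 1 := by omega
      obtain ⟨c, hc⟩ := ih (x / p) (Nat.div_lt_self hx hp) h1
      refine ⟨c + 1, ?_⟩
      have h2 : x = p * (x / p) := by omega
      rw [h2, hc, ← pow_succ']
    · have h1 : s p (x / p) = 0 := by omega
      have h2 : x / p = 0 := s_eq_zero hp _ h1
      have h3 := Nat.div_add_mod x p
      rw [h2, Nat.mul_zero] at h3
      refine ⟨0, ?_⟩
      rw [pow_zero]
      omega

/-- Subadditivity of digit sums, with digitwise characterization of equality. -/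
lemma add_lemma (hp : 1 < p) : ∀ N x y, x + y ≤ N →
    s p (x + y) ≤ s p x + s p y ∧
      (s p (x + y) = s p x + s p y →
        ∀ i, g p x i + g p y i < p ∧ g p (x + y) i = g p x i + g p y i) := by
  intro N
  induction N with
  | zero =>
    intro x y hxy
    have hx : x = 0 := by omega
    have hy : y = 0 := by omega
    subst hx; subst hy
    constructor
    · simp [s]
    · intro _ i
      simp only [g_zero_left, Nat.add_zero, Nat.zero_add]
      exact ⟨by omega, by simp [g_zero_left]⟩
  | succ N ih =>
    intro x y hxy
    rcases Nat.eq_zero_or_pos (x + y) with h0 | h0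
    · have hx : x = 0 := by omega
      have hy : y = 0 := by omega
      subst hx; subst hy
      constructor
      · simp [s]
      · intro _ i
        simp only [g_zero_left, Nat.add_zero, Nat.zero_add]
        exact ⟨by omega, by simp [g_zero_left]⟩
    have hp0 : 0 < p := by omega
    have hxd := Nat.div_add_mod x p
    have hyd := Nat.div_add_mod y p
    have hxm : x % p < p := Nat.mod_lt _ hp0
    have hym : y % p < p := Nat.mod_lt _ hp0
    have hx2 : 2 * (x / p) ≤ p * (x / p) := Nat.mul_le_mul_right _ hp
    have hy2 : 2 * (y / p) ≤ p * (y / p) := Nat.mul_le_mul_right _ hp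
    by_cases hc : x % p + y % p < p
    · -- no carry at digit 0
      have hq : x + y = p * (x / p + y / p) + (x % p + y % p) := by
        rw [Nat.mul_add]; omega
      have hmod : (x + y) % p = x % p + y % p := by
        rw [hq, Nat.mul_add_mod, Nat.mod_eq_of_lt hc]
      have hdiv : (x + y) / p = x / p + y / p := by
        rw [hq, Nat.mul_add_div hp0, Nat.div_eq_of_lt hc, add_zero]
      have hN : x / p + y / p ≤ N := by omega
      obtain ⟨ihle, iheq⟩ := ih (x / p) (y / p) hN
      have hs : s p (x + y) = (x % p + y % p) + s p (x / p + y / p) := by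
        rw [s_eq hp (x + y), hmod, hdiv]
      have hsx : s p x = x % p + s p (x / p) := s_eq hp x
      have hsy : s p y = y % p + s p (y / p) := s_eq hp y
      constructor
      · omega
      · intro h i
        have heq : s p (x / p + y / p) = s p (x / p) + s p (y / p) := by omega
        have hdig := iheq heq
        match i with
        | 0 => rw [g_zero, g_zero, g_zero, hmod]; exact ⟨hc, rfl⟩
        | (i + 1) =>
          rw [g_succ, g_succ, g_succ, hdiv]
          exact hdig i
    · -- carry at digit 0: strict inequality
      push_neg at hc
      have hq : x + y = p * (x / p + y / p + 1) + (x % p + y % p - p) := by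
        have : p * (x / p + y / p + 1) = p * (x / p) + p * (y / p) + p := by ring
        omega
      have hmod : (x + y) % p = x % p + y % p - p := by
        rw [hq, Nat.mul_add_mod,
          Nat.mod_eq_of_lt (show x % p + y % p - p < p by omega)]
      have hdiv : (x + y) / p = x / p + y / p + 1 := by
        rw [hq, Nat.mul_add_div hp0,
          Nat.div_eq_of_lt (show x % p + y % p - p < p by omega), add_zero]
      have hN : x / p + y / p + 1 ≤ N := by omega
      have hN' : x / p + y / p ≤ N := by omega
      obtain ⟨ihle1, -⟩ := ih (x / p + y / p) 1 hN
      obtain ⟨ihle2, -⟩ := ih (x / p) (y / p) hN'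
      have hs1 : s p 1 = 1 := s_self hp hp
      have hs : s p (x + y) = (x % p + y % p - p) + s p (x / p + y / p + 1) := by
        rw [s_eq hp (x + y), hmod, hdiv]
      have hsx : s p x = x % p + s p (x / p) := s_eq hp x
      have hsy : s p y = y % p + s p (y / p) := s_eq hp y
      have hlt : s p (x + y) < s p x + s p y := by omega
      exact ⟨le_of_lt hlt, fun h => absurd h (Nat.ne_of_lt hlt)⟩

/-- Digit sum of a multiple, with digitwise characterization of equality. -/
lemma mul_lemma (hp : 1 < p) (d : ℕ) : ∀ m, s p (m * d) ≤ m * s p d ∧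
    (s p (m * d) = m * s p d →
      ∀ i, m * g p d i < p ∧ g p (m * d) i = m * g p d i) := by
  intro m
  induction m with
  | zero =>
    constructor
    · simp [s]
    · intro _ i
      simp [g_zero_left]
      omega
  | succ m ih =>
    have hmd : (m + 1) * d = m * d + d := by ring
    obtain ⟨ile, ieq⟩ := ih
    obtain ⟨ale, aeq⟩ := add_lemma hp (m * d + d) (m * d) d le_rfl
    have hring : (m + 1) * s p d = m * s p d + s p d := by ring
    constructor
    · rw [hmd]; omega
    · intro h i
      rw [hmd] at h
      have h1 : s p (m * d) = m * s p d := by omega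
      have h2 : s p (m * d + d) = s p (m * d) + s p d := by omega
      obtain ⟨hd1, hd2⟩ := aeq h2 i
      obtain ⟨hm1, hm2⟩ := ieq h1 i
      have hring2 : (m + 1) * g p d i = m * g p d i + g p d i := by ring
      rw [hmd]
      omega

lemma s_mul_le (hp : 1 < p) : ∀ a b, s p (a * b) ≤ s p a * s p b := by
  intro a
  induction a using Nat.strong_induction_on with
  | _ a ih =>
    intro b
    rcases Nat.eq_zero_or_pos a with rfl | ha
    · simp [s]
    have hab : a * b = (a % p) * b + p * ((a / p) * b) := by
      have := Nat.div_add_mod a p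
      calc a * b = (p * (a / p) + a % p) * b := by rw [this]
        _ = (a % p) * b + p * ((a / p) * b) := by ring
    calc s p (a * b) = s p ((a % p) * b + p * ((a / p) * b)) := by rw [hab]
      _ ≤ s p ((a % p) * b) + s p (p * ((a / p) * b)) :=
          (add_lemma hp _ _ _ le_rfl).1
      _ = s p ((a % p) * b) + s p ((a / p) * b) := by rw [s_p_mul hp]
      _ ≤ (a % p) * s p b + s p (a / p) * s p b :=
          Nat.add_le_add (mul_lemma hp b (a % p)).1
            (ih (a / p) (Nat.div_lt_self ha hp) b)
      _ = s p a * s p b := by rw [s_eq hp a]; ring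

lemma s_eq_sum (hp : 1 < p) : ∀ N x, x < p ^ N →
    s p x = ∑ i ∈ Finset.range N, g p x i := by
  intro N
  induction N with
  | zero =>
    intro x hx
    have : x = 0 := by simpa using hx
    subst this
    simp [s]
  | succ N ih =>
    intro x hx
    have hp0 : 0 < p := by omega
    have hx' : x / p < p ^ N := by
      rw [Nat.div_lt_iff_lt_mul hp0, ← pow_succ]; exact hx
    rw [Finset.sum_range_succ', s_eq hp x, ih (x / p) hx']
    simp only [g_succ, g_zero]
    omega

/-- The main combinatorial equivalence. -/
lemma key (hp : 1 < p) {d m : ℕ} (hd : 2 ≤ d) (hm : 1 ≤ m) :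
    m * s p d + s p m = s p (m * d) + m ↔
      ((∀ i, m * g p d i < p ∧ m * g p d i = g p (m * d) i) ∨ ∃ c, d = p ^ c) := by
  constructor
  · intro hE
    by_cases hP : ∃ c, d = p ^ c
    · exact Or.inr hP
    left
    -- d is not a power of p, so s p d ≥ 2
    have hd0 : s p d ≠ 0 := fun h => by have := s_eq_zero hp d h; omega
    have hd1 : s p d ≠ 1 := fun h => hP (s_eq_one hp d h)
    have hsd : 2 ≤ s p d := by omega
    have hsm : s p m ≤ m := s_le m
    have hmul : s p (m * d) ≤ s p m * s p d := s_mul_le hp m d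
    -- derive s p m = m
    have h1 : m * s p d + s p m ≤ s p m * s p d + m := by omega
    have hsub : (m - s p m) * s p d = m * s p d - s p m * s p d :=
      Nat.sub_mul _ _ _
    have h2 : (m - s p m) * s p d ≤ m - s p m := by omega
    have h3 : (m - s p m) * 2 ≤ (m - s p m) * s p d :=
      Nat.mul_le_mul_left _ hsd
    have hsmeq : s p m = m := by omega
    have hmd : s p (m * d) = m * s p d := by omega
    exact fun i => ((mul_lemma hp d m).2 hmd i).imp id Eq.symm
  · rintro (hD | ⟨c, rfl⟩)
    · -- digitwise case
      have hd0 : d ≠ 0 := by omega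
      -- find a nonzero digit of d
      set i0 := Nat.log p d with hi0
      have hle : p ^ i0 ≤ d := Nat.pow_log_le_self p hd0
      have hlt : d < p ^ (i0 + 1) := Nat.lt_pow_succ_log_self hp d
      have hpow : 0 < p ^ i0 := Nat.pow_pos (by omega)
      have h1 : 1 ≤ d / p ^ i0 := (Nat.one_le_div_iff hpow).2 hle
      have h2 : d / p ^ i0 < p := by
        rw [Nat.div_lt_iff_lt_mul hpow, ← pow_succ']; exact hlt
      have hgi : 1 ≤ g p d i0 := by
        unfold g; rw [Nat.mod_eq_of_lt h2]; exact h1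
      have hmp : m < p := by
        have ha := (hD i0).1
        have hb : m * 1 ≤ m * g p d i0 := Nat.mul_le_mul_left _ hgi
        omega
      have hsm : s p m = m := s_self hp hmp
      -- s p (m * d) = m * s p d
      have hN : m * d < p ^ (m * d) := Nat.lt_pow_self hp
      have hdd : d ≤ m * d := Nat.le_mul_of_pos_left d hm
      have hdN : d < p ^ (m * d) := lt_of_le_of_lt hdd hN
      have hsmd : s p (m * d) = m * s p d := by
        rw [s_eq_sum hp (m * d) (m * d) hN, s_eq_sum hp (m * d) d hdN,
          Finset.mul_sum]
        exact Finset.sum_congr rfl fun i _ => ((hD i).2).symm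
      omega
    · -- d = p ^ c
      rw [s_pow hp, s_mul_pow hp]
      omega

end Stmt6Aux

open Stmt6Aux in
theorem stmt_6 (n d p : ℕ) (hn : 0 < n) (hd1 : 1 < d) (hdn : d < n)
    (hdvd : d ∣ n) (hp : p.Prime) :
    p ∣ Nat.factorial n / (Nat.factorial d ^ (n / d) * Nat.factorial (n / d)) ↔
      (¬ ∀ i : ℕ, (n / d) * (Nat.digits p d).getD i 0 < p ∧
          (n / d) * (Nat.digits p d).getD i 0 = (Nat.digits p n).getD i 0) ∧
      (¬ ∃ c : ℕ, d = p ^ c) := by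
  haveI : Fact p.Prime := ⟨hp⟩
  have hp1 : 1 < p := hp.one_lt
  set m := n / d with hm
  have hnm : m * d = n := Nat.div_mul_cancel hdvd
  have hd0 : d ≠ 0 := by omega
  have hm1 : 1 ≤ m := by
    rcases Nat.eq_zero_or_pos m with h | h
    · rw [h, Nat.zero_mul] at hnm; omega
    · exact h
  -- identify the quotient with uniformBell
  have hquot : Nat.factorial n / (Nat.factorial d ^ m * Nat.factorial m)
      = Nat.uniformBell m d := by
    rw [← hnm, ← Nat.uniformBell_eq_div m hd0]
  have hI : Nat.uniformBell m d * Nat.factorial d ^ m * Nat.factorial m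
      = Nat.factorial (m * d) := Nat.uniformBell_mul_eq m hd0
  set I := Nat.uniformBell m d with hIdef
  have hI0 : I ≠ 0 := by
    intro h
    have := Nat.factorial_pos (m * d)
    rw [← hI, h] at this
    simp at this
  -- valuation bookkeeping
  have hfne : ∀ k : ℕ, Nat.factorial k ≠ 0 := fun k => (Nat.factorial_pos k).ne'
  have hV : padicValNat p (Nat.factorial (m * d)) =
      padicValNat p I + (m * padicValNat p (Nat.factorial d)
        + padicValNat p (Nat.factorial m)) := by
    rw [← hI, mul_assoc, padicValNat.mul hI0 (mul_ne_zero (pow_ne_zero _ (hfne d)) (hfne m)),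
      padicValNat.mul (pow_ne_zero _ (hfne d)) (hfne m),
      padicValNat.pow _ _]
  have F1 := sub_one_mul_padicValNat_factorial (p := p) (m * d)
  have F2 := sub_one_mul_padicValNat_factorial (p := p) d
  have F3 := sub_one_mul_padicValNat_factorial (p := p) m
  have hle1 : (Nat.digits p (m * d)).sum ≤ m * d := Nat.digit_sum_le p _
  have hle2 : (Nat.digits p d).sum ≤ d := Nat.digit_sum_le p d
  have hle3 : (Nat.digits p m).sum ≤ m := Nat.digit_sum_le p m
  have hp1' : 1 ≤ p := by omega
  have cast1 : ((p - 1 : ℕ) : ℤ) = (p : ℤ) - 1 := by omega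
  have F1z : ((p : ℤ) - 1) * (padicValNat p (Nat.factorial (m * d)) : ℤ)
      = ((m * d : ℕ) : ℤ) - ((Nat.digits p (m * d)).sum : ℤ) := by
    rw [← cast1, ← Nat.cast_mul, F1, Nat.cast_sub hle1]
  have F2z : ((p : ℤ) - 1) * (padicValNat p (Nat.factorial d) : ℤ)
      = (d : ℤ) - ((Nat.digits p d).sum : ℤ) := by
    rw [← cast1, ← Nat.cast_mul, F2, Nat.cast_sub hle2]
  have F3z : ((p : ℤ) - 1) * (padicValNat p (Nat.factorial m) : ℤ)
      = (m : ℤ) - ((Nat.digits p m).sum : ℤ) := by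
    rw [← cast1, ← Nat.cast_mul, F3, Nat.cast_sub hle3]
  have hVz : (padicValNat p (Nat.factorial (m * d)) : ℤ) =
      padicValNat p I + (m * padicValNat p (Nat.factorial d)
        + padicValNat p (Nat.factorial m)) := by exact_mod_cast hV
  have hz : ((p : ℤ) - 1) * (padicValNat p I : ℤ) =
      ((m : ℤ) * (s p d : ℤ) + (s p m : ℤ)) - ((s p (m * d) : ℤ) + (m : ℤ)) := by
    unfold s
    linear_combination (norm := (push_cast; ring1))
      F1z - (m : ℤ) * F2z - F3z - ((p : ℤ) - 1) * hVz
  -- p ∣ I ↔ inequality of digit sums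
  have hppos : (0 : ℤ) < (p : ℤ) - 1 := by
    have : (1 : ℤ) < (p : ℤ) := by exact_mod_cast hp1
    omega
  have hdvdI : p ∣ I ↔ ¬ (m * s p d + s p m = s p (m * d) + m) := by
    rw [dvd_iff_padicValNat_ne_zero hI0]
    constructor
    · intro hv he
      apply hv
      have heZ : ((m : ℤ) * (s p d : ℤ) + (s p m : ℤ)) = ((s p (m * d) : ℤ) + (m : ℤ)) := by
        exact_mod_cast he
      have h0 : ((p : ℤ) - 1) * (padicValNat p I : ℤ) = 0 := by rw [hz]; linarith
      have h1 : (padicValNat p I : ℤ) = 0 := by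
        rcases mul_eq_zero.mp h0 with h | h
        · omega
        · exact h
      exact_mod_cast h1
    · intro hne hv
      apply hne
      have h0 : ((p : ℤ) - 1) * (padicValNat p I : ℤ) = 0 := by rw [hv]; simp
      have h1 : ((m : ℤ) * (s p d : ℤ) + (s p m : ℤ)) = ((s p (m * d) : ℤ) + (m : ℤ)) := by
        linarith [hz, h0]
      exact_mod_cast h1
  rw [show Nat.factorial d ^ (n / d) * Nat.factorial (n / d)
      = Nat.factorial d ^ m * Nat.factorial m from rfl, hquot, hdvdI,
    key hp1 (by omega : 2 ≤ d) hm1]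
  simp only [getD_eq hp1, ← hnm]
  tauto
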